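/- Suppose a solution (W, X, Y) of the linearized-dominated system near the source (0,1,0) satisfies |(W(0), X(0)-1, Y(0))| < ε for ε small enough. Then for all y ≤ 0, |(W(y), X(y)-1, Y(y))| ≤ √3 ε e^{μ y} for some 0 < μ < 1 - 1/√n. -/

import Mathlib

open Set


set_option maxHeartbeats 1000000 in
lemma key_ineq (lam sq δ u x w : ℝ) (hsq : 1 ≤ sq) (hδ0 : 0 ≤ δ) (hδ1 : δ ≤ 1)
    (hCδ : (4 + |lam| * (sq + 2)) * δ ≤ (1 - 1/sq)/2)
    (hu : u^2 ≤ δ^2) (hv : (x-1)^2 ≤ δ^2) (hw : w^2 ≤ δ^2) :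
    (1 - 1/sq)/2 * (u^2 + (x-1)^2 + w^2) ≤
      u * (u * (x^2 - lam*u^2))
      + (x-1) * (x^3 - x + w^2/sq + lam*(sq - x)*u^2)
      + w * (w * (x^2 - x/sq - lam*u^2)) := by
  have hsq0 : (0:ℝ) < sq := lt_of_lt_of_le one_pos hsq
  have hs0 : 0 < 1/sq := by positivity
  have hs1 : 1/sq ≤ 1 := by rw [div_le_one hsq0]; exact hsq
  have hl0 : (0:ℝ) ≤ |lam| := abs_nonneg lam
  have hau : |u| ≤ δ := by nlinarith [sq_abs u, abs_nonneg u]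
  have hav : |x - 1| ≤ δ := by nlinarith [sq_abs (x-1), abs_nonneg (x-1)]
  obtain ⟨hu1, hu2⟩ := abs_le.mp hau
  obtain ⟨hv1, hv2⟩ := abs_le.mp hav
  have hδδ : δ^2 ≤ δ := by nlinarith
  -- bounds for the inner factor I = (sq-1)(x-1) - (x-1)^2 - u^2
  have hI1 : (sq-1)*(x-1) - (x-1)^2 - u^2 ≤ (sq + 2) * δ := by
    nlinarith [sq_nonneg u, sq_nonneg (x-1),
      mul_le_mul_of_nonneg_left hv2 (by linarith : (0:ℝ) ≤ sq - 1)]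
  have hI2 : -((sq + 2) * δ) ≤ (sq-1)*(x-1) - (x-1)^2 - u^2 := by
    nlinarith [mul_le_mul_of_nonneg_left hv1 (by linarith : (0:ℝ) ≤ sq - 1)]
  have hIabs : |(sq-1)*(x-1) - (x-1)^2 - u^2| ≤ (sq + 2) * δ := abs_le.mpr ⟨hI2, hI1⟩
  have hLam : |lam * ((sq-1)*(x-1) - (x-1)^2 - u^2)| ≤ |lam| * ((sq + 2) * δ) := by
    rw [abs_mul]
    exact mul_le_mul_of_nonneg_left hIabs hl0
  obtain ⟨hL1, hL2⟩ := abs_le.mp hLam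
  -- bound on lam * u^2
  have hE0 : |lam * u^2| ≤ |lam| * ((sq+2) * δ) := by
    rw [abs_mul, abs_of_nonneg (sq_nonneg u)]
    have h1 : |lam| * u^2 ≤ |lam| * δ := by
      apply mul_le_mul_of_nonneg_left _ hl0
      exact hu.trans hδδ
    have h2 : |lam| * δ ≤ |lam| * ((sq+2)*δ) := by
      apply mul_le_mul_of_nonneg_left _ hl0
      nlinarith
    linarith
  obtain ⟨hE1, hE2⟩ := abs_le.mp hE0
  set C : ℝ := 4 + |lam| * (sq + 2) with hCdef
  have hCexp : C * δ = 4*δ + |lam| * ((sq+2)*δ) := by rw [hCdef]; ring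
  -- coefficient bounds
  have hA2 : -(C*δ) ≤ 2*(x-1) + (x-1)^2 + lam*((sq-1)*(x-1) - (x-1)^2 - u^2) := by
    have := sq_nonneg (x-1); linarith
  have hB2 : -(C*δ) ≤ 3*(x-1) + (x-1)^2 := by
    have hpos : 0 ≤ |lam| * ((sq+2)*δ) := by positivity
    have := sq_nonneg (x-1); linarith
  have hEc2 : -(C*δ) ≤ 2*(x-1) + (x-1)^2 - lam*u^2 := by
    have := sq_nonneg (x-1); linarith
  -- multiply by squares
  have e1 : -(C*δ)*u^2 ≤ u^2 * (2*(x-1) + (x-1)^2 + lam*((sq-1)*(x-1) - (x-1)^2 - u^2)) := by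
    nlinarith [mul_le_mul_of_nonneg_left hA2 (sq_nonneg u)]
  have e2 : -(C*δ)*(x-1)^2 ≤ (x-1)^2 * (3*(x-1) + (x-1)^2) := by
    nlinarith [mul_le_mul_of_nonneg_left hB2 (sq_nonneg (x-1))]
  have e3 : -(C*δ)*w^2 ≤ w^2 * (2*(x-1) + (x-1)^2 - lam*u^2) := by
    nlinarith [mul_le_mul_of_nonneg_left hEc2 (sq_nonneg w)]
  have hident :
      u * (u * (x^2 - lam*u^2))
      + (x-1) * (x^3 - x + w^2/sq + lam*(sq - x)*u^2)
      + w * (w * (x^2 - x/sq - lam*u^2))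
      = u^2 + 2*(x-1)^2 + (1 - 1/sq)*w^2
        + u^2 * (2*(x-1) + (x-1)^2 + lam*((sq-1)*(x-1) - (x-1)^2 - u^2))
        + (x-1)^2 * (3*(x-1) + (x-1)^2)
        + w^2 * (2*(x-1) + (x-1)^2 - lam*u^2) := by
    field_simp
    ring
  rw [hident]
  have q1 : 0 ≤ ((1 - 1/sq)/2 - C*δ) * u^2 := mul_nonneg (by linarith) (sq_nonneg u)
  have q2 : 0 ≤ ((1 - 1/sq)/2 - C*δ) * (x-1)^2 := mul_nonneg (by linarith) (sq_nonneg (x-1))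
  have q3 : 0 ≤ ((1 - 1/sq)/2 - C*δ) * w^2 := mul_nonneg (by linarith) (sq_nonneg w)
  have q4 : 0 ≤ (1/sq) * u^2 := mul_nonneg hs0.le (sq_nonneg u)
  have q5 : 0 ≤ (1/sq) * (x-1)^2 := mul_nonneg hs0.le (sq_nonneg (x-1))
  have q6 : 0 ≤ (x-1)^2 := sq_nonneg (x-1)
  nlinarith [e1, e2, e3, q1, q2, q3, q4, q5, q6]

set_option maxHeartbeats 4000000 in
/-- **Exponential estimate near the source `(0,1,0)`.**  There is `0 < μ < 1 - 1/√n`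
(the least eigenvalue) and `ε₀ > 0` such that for any `0 < ε < ε₀`, every solution
`(W, X, Y)` of `W' = W(X² - λW²)`, `X' = X³ - X + Y²/√n + λ(√n - X)W²`,
`Y' = Y(X² - X/√n - λW²)` on `(-∞, 0]` with `|(W(0), X(0)-1, Y(0))| < ε` satisfies
`|(W(y), X(y)-1, Y(y))| ≤ √3 ε e^{μ y}` for all `y ≤ 0`. -/
theorem exponential_estimate_near_source (n : ℕ) (hn : 2 ≤ n) (lam : ℝ) :
    ∃ μ : ℝ, 0 < μ ∧ μ < 1 - 1 / Real.sqrt n ∧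
    ∃ ε₀ > (0 : ℝ), ∀ ε : ℝ, 0 < ε → ε < ε₀ →
      ∀ W X Y : ℝ → ℝ,
        (∀ y ≤ (0 : ℝ), HasDerivAt W (W y * ((X y) ^ 2 - lam * (W y) ^ 2)) y) →
        (∀ y ≤ (0 : ℝ), HasDerivAt X ((X y) ^ 3 - X y + (Y y) ^ 2 / Real.sqrt n
            + lam * (Real.sqrt n - X y) * (W y) ^ 2) y) →
        (∀ y ≤ (0 : ℝ), HasDerivAt Y (Y y * ((X y) ^ 2 - X y / Real.sqrt n
            - lam * (W y) ^ 2)) y) →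
        Real.sqrt ((W 0) ^ 2 + (X 0 - 1) ^ 2 + (Y 0) ^ 2) < ε →
        ∀ y ≤ (0 : ℝ),
          Real.sqrt ((W y) ^ 2 + (X y - 1) ^ 2 + (Y y) ^ 2)
            ≤ Real.sqrt 3 * ε * Real.exp (μ * y) := by
  have hn2 : (2:ℝ) ≤ (n:ℝ) := by exact_mod_cast hn
  have hsqnn : (0:ℝ) ≤ Real.sqrt n := Real.sqrt_nonneg _
  have hsq1 : (1:ℝ) < Real.sqrt n := by
    nlinarith [Real.sq_sqrt (by positivity : (0:ℝ) ≤ (n:ℝ))]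
  set sq : ℝ := Real.sqrt n with hsqdef
  have hs0 : 0 < 1/sq := by positivity
  have hs1 : 1/sq < 1 := by rw [div_lt_one (by linarith)]; exact hsq1
  set μ : ℝ := (1 - 1/sq)/2 with hμdef
  have hμ0 : 0 < μ := by rw [hμdef]; linarith
  have hμlt : μ < 1 - 1/sq := by rw [hμdef]; linarith
  set C : ℝ := 4 + |lam| * (sq + 2) with hCdef
  have hC4 : (4:ℝ) ≤ C := by
    rw [hCdef]
    nlinarith [abs_nonneg lam]
  have hC0 : (0:ℝ) < C := by linarith
  set δ : ℝ := μ / C with hδdef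
  have hδ0 : 0 < δ := by positivity
  have hδ1 : δ ≤ 1 := by
    rw [hδdef, div_le_one hC0]; nlinarith
  have hCδ : C * δ ≤ μ := by
    rw [hδdef, mul_div_cancel₀ _ (ne_of_gt hC0)]
  have hCδ' : (4 + |lam| * (sq + 2)) * δ ≤ (1 - 1/sq)/2 := by
    rw [← hCdef, ← hμdef]; exact hCδ
  clear_value μ C δ
  refine ⟨μ, hμ0, hμlt, δ/2, by positivity, ?_⟩
  intro ε hε hεδ W X Y hW hX hY h0 y hy
  set f : ℝ → ℝ := fun t => ((W t)^2 + (X t - 1)^2 + (Y t)^2) * Real.exp (-(2*μ*t)) with hfdef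
  clear_value f
  -- derivative of f
  have hderiv : ∀ t ≤ (0:ℝ), HasDerivAt f
      ((2*(W t * (W t * ((X t)^2 - lam*(W t)^2))
        + (X t - 1) * ((X t)^3 - X t + (Y t)^2/sq + lam*(sq - X t)*(W t)^2)
        + Y t * (Y t * ((X t)^2 - X t/sq - lam*(W t)^2)))
        - 2*μ*((W t)^2 + (X t - 1)^2 + (Y t)^2)) * Real.exp (-(2*μ*t))) t := by
    intro t ht
    rw [hfdef]
    have h1 := hW t ht
    have h2 := hX t ht
    have h3 := hY t ht
    have e1 : HasDerivAt (fun z => (W z)^2)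
        ((2:ℝ) * (W t)^1 * (W t * ((X t)^2 - lam*(W t)^2))) t := by
      exact_mod_cast h1.pow 2
    have e2 : HasDerivAt (fun z => (X z - 1)^2)
        ((2:ℝ) * (X t - 1)^1 * ((X t)^3 - X t + (Y t)^2/sq + lam*(sq - X t)*(W t)^2)) t := by
      exact_mod_cast (h2.sub_const 1).pow 2
    have e3 : HasDerivAt (fun z => (Y z)^2)
        ((2:ℝ) * (Y t)^1 * (Y t * ((X t)^2 - X t/sq - lam*(W t)^2))) t := by
      exact_mod_cast h3.pow 2
    have esum := (e1.add e2).add e3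
    have eexp : HasDerivAt (fun z : ℝ => Real.exp (-(2*μ*z)))
        (Real.exp (-(2*μ*t)) * (-(2*μ))) t := by
      have hlin : HasDerivAt (fun z : ℝ => -(2*μ*z)) (-(2*μ)) t := by
        exact (((hasDerivAt_id t).const_mul (2*μ)).neg : HasDerivAt (fun z : ℝ => -(2*μ*z)) (-(2*μ*1)) t).congr_deriv (by ring)
      exact hlin.exp
    have := esum.mul eexp
    exact this.congr_deriv (by simp only [Pi.add_apply]; ring)
  have hfc : ContinuousOn f (Iic (0:ℝ)) :=
    fun t ht => (hderiv t ht).continuousAt.continuousWithinAt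
  have hfnn : ∀ t : ℝ, 0 ≤ f t := by
    intro t; rw [hfdef]; positivity
  have hf0 : f 0 = (W 0)^2 + (X 0 - 1)^2 + (Y 0)^2 := by
    rw [hfdef]; simp
  have hf0lt : f 0 < ε^2 := by
    rw [hf0]
    nlinarith [Real.sq_sqrt (by positivity : (0:ℝ) ≤ (W 0)^2 + (X 0 - 1)^2 + (Y 0)^2),
      Real.sqrt_nonneg ((W 0)^2 + (X 0 - 1)^2 + (Y 0)^2), h0]
  -- r2 ≤ f on Iic 0
  have hr2f : ∀ t ≤ (0:ℝ), (W t)^2 + (X t - 1)^2 + (Y t)^2 ≤ f t := by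
    intro t ht
    have h1 : (1:ℝ) ≤ Real.exp (-(2*μ*t)) := by
      rw [Real.one_le_exp_iff]; nlinarith
    have h2 : (0:ℝ) ≤ (W t)^2 + (X t - 1)^2 + (Y t)^2 := by positivity
    calc (W t)^2 + (X t - 1)^2 + (Y t)^2
        ≤ ((W t)^2 + (X t - 1)^2 + (Y t)^2) * Real.exp (-(2*μ*t)) :=
          le_mul_of_one_le_right h2 h1
      _ = f t := by rw [hfdef]
  -- nonneg derivative where r2 small
  have hdnn : ∀ t ≤ (0:ℝ), (W t)^2 + (X t - 1)^2 + (Y t)^2 ≤ δ^2 → 0 ≤ deriv f t := by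
    intro t ht hr
    rw [(hderiv t ht).deriv]
    have hu : (W t)^2 ≤ δ^2 := by nlinarith [sq_nonneg (X t - 1), sq_nonneg (Y t)]
    have hv : (X t - 1)^2 ≤ δ^2 := by nlinarith [sq_nonneg (W t), sq_nonneg (Y t)]
    have hw : (Y t)^2 ≤ δ^2 := by nlinarith [sq_nonneg (X t - 1), sq_nonneg (W t)]
    have hk := key_ineq lam sq δ (W t) (X t) (Y t) hsq1.le hδ0.le hδ1
      hCδ' hu hv hw
    rw [← hμdef] at hk
    have : 0 ≤ 2*(W t * (W t * ((X t)^2 - lam*(W t)^2))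
        + (X t - 1) * ((X t)^3 - X t + (Y t)^2/sq + lam*(sq - X t)*(W t)^2)
        + Y t * (Y t * ((X t)^2 - X t/sq - lam*(W t)^2)))
        - 2*μ*((W t)^2 + (X t - 1)^2 + (Y t)^2) := by linarith
    exact mul_nonneg this (Real.exp_nonneg _)
  -- monotonicity helper
  have mono_of : ∀ a : ℝ, a ≤ 0 →
      (∀ t ∈ Ioo a (0:ℝ), (W t)^2 + (X t - 1)^2 + (Y t)^2 ≤ δ^2) → f a ≤ f 0 := by
    intro a ha hsmall
    have hmono : MonotoneOn f (Icc a 0) := by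
      apply monotoneOn_of_deriv_nonneg (convex_Icc a 0)
        (hfc.mono (fun z hz => hz.2))
      · intro t ht
        rw [interior_Icc] at ht
        exact (hderiv t ht.2.le).differentiableAt.differentiableWithinAt
      · intro t ht
        rw [interior_Icc] at ht
        exact hdnn t ht.2.le (hsmall t ht)
    exact hmono (left_mem_Icc.mpr ha) (right_mem_Icc.mpr ha) ha
  have h2ε : 2*ε^2 ≤ δ^2 := by nlinarith
  -- the bootstrap set
  set F : ℝ → ℝ := fun t => f (min t 0) with hFdef
  have hFc : Continuous F := by
    apply hfc.comp_continuous (continuous_id.min continuous_const)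
    intro z
    exact min_le_right z 0
  set B : Set ℝ := Icc y 0 ∩ F ⁻¹' (Ici (2*ε^2)) with hBdef
  have hBclosed : IsClosed B := IsClosed.inter isClosed_Icc (isClosed_Ici.preimage hFc)
  have hBempty : B = ∅ := by
    by_contra hne
    rw [← Ne, ← nonempty_iff_ne_empty] at hne
    have hbdd : BddAbove B := ⟨0, fun t ht => ht.1.2⟩
    set b := sSup B with hbdef
    have hbB : b ∈ B := hBclosed.csSup_mem hne hbdd
    have hby : y ≤ b := hbB.1.1
    have hb0 : b ≤ 0 := hbB.1.2
    have hFb : 2*ε^2 ≤ f b := by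
      have h := hbB.2
      simp only [hFdef, mem_preimage, mem_Ici] at h
      rwa [min_eq_left hb0] at h
    have hfb : f b ≤ f 0 := by
      apply mono_of b hb0
      intro t ht
      have htB : t ∉ B := by
        intro hmem
        exact absurd (le_csSup hbdd hmem) (not_le.mpr ht.1)
      have ht0 : t ≤ 0 := ht.2.le
      have hlt : f t < 2*ε^2 := by
        by_contra hge
        push_neg at hge
        apply htB
        refine ⟨⟨le_trans hby ht.1.le, ht0⟩, ?_⟩
        simp only [hFdef, mem_preimage, mem_Ici]
        rwa [min_eq_left ht0]
      have := hr2f t ht0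
      linarith
    nlinarith [hε]
  -- conclusion
  have hall : ∀ t ∈ Ioo y (0:ℝ), (W t)^2 + (X t - 1)^2 + (Y t)^2 ≤ δ^2 := by
    intro t ht
    have htB : t ∉ B := by rw [hBempty]; exact notMem_empty t
    have ht0 : t ≤ 0 := ht.2.le
    have hlt : f t < 2*ε^2 := by
      by_contra hge
      push_neg at hge
      apply htB
      refine ⟨⟨ht.1.le, ht0⟩, ?_⟩
      simp only [hFdef, mem_preimage, mem_Ici]
      rwa [min_eq_left ht0]
    have := hr2f t ht0
    linarith
  have hfy : f y ≤ f 0 := mono_of y hy hall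
  have hfyε : f y ≤ ε^2 := le_of_lt (lt_of_le_of_lt hfy hf0lt)
  have hEinv : Real.exp (-(2*μ*y)) * Real.exp (2*μ*y) = 1 := by
    rw [← Real.exp_add]; simp
  have hr2y : (W y)^2 + (X y - 1)^2 + (Y y)^2 ≤ ε^2 * Real.exp (2*μ*y) := by
    have h1 : f y * Real.exp (2*μ*y) = (W y)^2 + (X y - 1)^2 + (Y y)^2 := by
      rw [hfdef]
      calc ((W y)^2 + (X y - 1)^2 + (Y y)^2) * Real.exp (-(2*μ*y)) * Real.exp (2*μ*y)
          = ((W y)^2 + (X y - 1)^2 + (Y y)^2) * (Real.exp (-(2*μ*y)) * Real.exp (2*μ*y)) := by ring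
        _ = (W y)^2 + (X y - 1)^2 + (Y y)^2 := by rw [hEinv, mul_one]
    rw [← h1]
    exact mul_le_mul_of_nonneg_right hfyε (Real.exp_nonneg _)
  have hsq3 : (Real.sqrt 3 * ε * Real.exp (μ*y))^2 = 3 * ε^2 * (Real.exp (μ*y))^2 := by
    rw [mul_pow, mul_pow, Real.sq_sqrt (by norm_num : (0:ℝ) ≤ 3)]
  have hexp2 : (Real.exp (μ*y))^2 = Real.exp (2*μ*y) := by
    rw [pow_two, ← Real.exp_add]
    congr 1
    ring
  have hfin : (W y)^2 + (X y - 1)^2 + (Y y)^2 ≤ (Real.sqrt 3 * ε * Real.exp (μ*y))^2 := by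
    rw [hsq3, hexp2]
    nlinarith [Real.exp_nonneg (2*μ*y), mul_nonneg (sq_nonneg ε) (Real.exp_nonneg (2*μ*y))]
  calc Real.sqrt ((W y)^2 + (X y - 1)^2 + (Y y)^2)
      ≤ Real.sqrt ((Real.sqrt 3 * ε * Real.exp (μ*y))^2) := Real.sqrt_le_sqrt hfin
    _ = Real.sqrt 3 * ε * Real.exp (μ*y) := Real.sqrt_sq (by positivity)
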